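/- A partial-coverage RWNN is not complete with respect to 1-WL: there exist non-isomorphic graphs G and H that 1-WL distinguishes, yet whose restricted walk multisets (excluding all walks visiting a designated vertex in each graph) are identical, so any function of the covered walks assigns G and H the same value. -/

import Mathlib

open scoped Classical

namespace RSNN

/-- The type of (free, injectively-hashed) 1-WL colors after `t` rounds. -/
def WLColorType (σ : Type) : ℕ → Type
  | 0 => σ
  | t + 1 => WLColorType σ t × Multiset (WLColorType σ t)

/-- The 1-dimensional Weisfeiler–Lehman color refinement: round `t+1` (injectively)
hashes the current color of `u` with the multiset of its neighbors' colors. -/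
noncomputable def WL {V : Type} [Fintype V] [DecidableEq V]
    (G : SimpleGraph V) [DecidableRel G.Adj] {σ : Type} (π0 : V → σ) :
    (t : ℕ) → V → WLColorType σ t
  | 0 => π0
  | t + 1 => fun u => (WL G π0 t u, (G.neighborFinset u).val.map (WL G π0 t))

variable {V : Type} [Fintype V] [DecidableEq V]

/-- The multiset of (supports of) all walks in `G` of length at most `ℓ` that avoid
the designated vertex `x` — the "partial coverage" walk multiset. -/
noncomputable def coveredWalks (G : SimpleGraph V) [DecidableRel G.Adj]
    (x : V) (ℓ : ℕ) : Multiset (List V) :=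
  ∑ L ∈ Finset.range (ℓ + 1), ∑ a : V, ∑ b : V,
    ((G.finsetWalkLength L a b).val.filter fun p => x ∉ p.support).map fun p => p.support

lemma key (G : SimpleGraph (Fin 2)) [DecidableRel G.Adj] (L : ℕ) (a b : Fin 2) :
    (((G.finsetWalkLength L a b).val.filter fun p => (1 : Fin 2) ∉ p.support).map
      fun p => p.support) =
    if L = 0 ∧ a = 0 ∧ b = 0 then {[(0 : Fin 2)]} else 0 := by
  have hall : ∀ p : G.Walk a b, (1 : Fin 2) ∉ p.support →
      p.length = 0 ∧ a = 0 ∧ b = 0 ∧ p.support = [(0 : Fin 2)] := by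
    intro p hp
    have ha : a = 0 := by
      have := p.start_mem_support
      fin_cases a
      · rfl
      · exact absurd this hp
    have hb : b = 0 := by
      have := p.end_mem_support
      fin_cases b
      · rfl
      · exact absurd this hp
    have hlen : p.length = 0 := by
      cases p with
      | nil => rfl
      | cons h q =>
        rename_i c
        have hc : c ∈ (SimpleGraph.Walk.cons h q).support := by
          simp [SimpleGraph.Walk.support_cons]
        have hc0 : c = 0 := by
          fin_cases c
          · rfl
          · exact absurd hc hp
        subst ha; subst hc0
        exact absurd h (G.loopless.irrefl 0)
    subst ha; subst hb
    refine ⟨hlen, rfl, rfl, ?_⟩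
    have : p = SimpleGraph.Walk.nil := SimpleGraph.Walk.eq_nil_iff_nil.mpr (SimpleGraph.Walk.length_eq_zero_iff.mp hlen)
    subst this
    rfl
  by_cases hc : L = 0 ∧ a = 0 ∧ b = 0
  · obtain ⟨hL, ha, hb⟩ := hc
    subst hL; subst ha; subst hb
    simp only [if_pos (⟨rfl, rfl, rfl⟩ : (0:ℕ) = 0 ∧ (0:Fin 2) = 0 ∧ (0:Fin 2) = 0)]
    have hfin : G.finsetWalkLength 0 0 0 = {SimpleGraph.Walk.nil} := by
      ext p
      simp only [SimpleGraph.mem_finsetWalkLength_iff, Finset.mem_singleton]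
      exact SimpleGraph.Walk.length_eq_zero_iff.trans SimpleGraph.Walk.eq_nil_iff_nil.symm
    rw [hfin]
    have hn : (1:Fin 2) ∉ (SimpleGraph.Walk.nil : G.Walk 0 0).support := by simp
    simp [Multiset.filter_singleton, hn]
  · rw [if_neg hc]
    have hfil : ((G.finsetWalkLength L a b).val.filter fun p => (1 : Fin 2) ∉ p.support) = 0 := by
      rw [Multiset.filter_eq_nil]
      intro p hp hnot
      obtain ⟨hlen, ha, hb, _⟩ := hall p hnot
      have := SimpleGraph.mem_finsetWalkLength_iff.mp hp
      exact hc ⟨by omega, ha, hb⟩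
    rw [hfil, Multiset.map_zero]

omit [Fintype V] [DecidableEq V] in
lemma card_nf (G : SimpleGraph V) (u : V) [Fintype (G.neighborSet u)] :
    Multiset.card (G.neighborFinset u).val = G.degree u := rfl

lemma deg_bot {W : Type} [Fintype W] [DecidableEq W] (v : W)
    [Fintype ((⊥ : SimpleGraph W).neighborSet v)] :
    (⊥ : SimpleGraph W).degree v = 0 := by
  have h : (⊥ : SimpleGraph W).neighborFinset v = ∅ :=
    Finset.eq_empty_of_forall_notMem fun w hw =>
      (SimpleGraph.mem_neighborFinset _ _ _).mp hw
  simp [SimpleGraph.degree, h]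

lemma deg_top (v : Fin 2) [Fintype ((⊤ : SimpleGraph (Fin 2)).neighborSet v)] :
    (⊤ : SimpleGraph (Fin 2)).degree v ≠ 0 := by
  intro h
  have h2 : v + 1 ∈ (⊤ : SimpleGraph (Fin 2)).neighborFinset v := by
    rw [SimpleGraph.mem_neighborFinset]
    fin_cases v <;> decide
  have h3 : (⊤ : SimpleGraph (Fin 2)).neighborFinset v = ∅ := Finset.card_eq_zero.mp h
  rw [h3] at h2
  exact absurd h2 (Finset.notMem_empty _)

lemma wl_aux {d1 : DecidableRel (⊥ : SimpleGraph (Fin 2)).Adj}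
    {d2 : DecidableRel (⊤ : SimpleGraph (Fin 2)).Adj} :
    Multiset.map (@WL (Fin 2) _ _ ⊥ d1 Unit (fun _ => ()) 1) Finset.univ.val ≠
    Multiset.map (@WL (Fin 2) _ _ ⊤ d2 Unit (fun _ => ()) 1) Finset.univ.val := by
  intro h
  have hmem : (@WL (Fin 2) _ _ ⊥ d1 Unit (fun _ => ()) 1 0) ∈
      Multiset.map (@WL (Fin 2) _ _ ⊥ d1 Unit (fun _ => ()) 1) Finset.univ.val :=
    Multiset.mem_map_of_mem _ (Finset.mem_univ_val _)
  rw [h] at hmem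
  obtain ⟨u, -, hu⟩ := Multiset.mem_map.mp hmem
  have hsnd := congrArg (fun z => Multiset.card z.2) hu
  simp only [WL] at hsnd
  erw [Multiset.card_map, Multiset.card_map] at hsnd
  rw [card_nf, card_nf] at hsnd
  rw [deg_bot] at hsnd
  exact deg_top u hsnd

/-- A partial-coverage RWNN is not complete w.r.t. 1-WL: there are
non-isomorphic graphs `G, H` that 1-WL distinguishes (via color multisets), yet whose
restricted walk multisets — excluding all walks visiting a designated vertex in each
graph — are identical for every length bound, so any function of the covered walks
assigns `G` and `H` the same value. -/
theorem partial_coverage_not_WL_complete :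
    ∃ (N : ℕ) (G H : SimpleGraph (Fin N)) (x y : Fin N),
      IsEmpty (G ≃g H) ∧
      (∃ t, Multiset.map (WL G (fun _ => ()) t) Finset.univ.val ≠
            Multiset.map (WL H (fun _ => ()) t) Finset.univ.val) ∧
      (∀ ℓ : ℕ, coveredWalks G x ℓ = coveredWalks H y ℓ) ∧
      (∀ {α : Type} (f : Multiset (List (Fin N)) → α) (ℓ : ℕ),
        f (coveredWalks G x ℓ) = f (coveredWalks H y ℓ)) := by
  refine ⟨2, ⊥, ⊤, 1, 1, ?_, ?_, ?_, ?_⟩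
  · constructor
    intro e
    have h01 : (⊤ : SimpleGraph (Fin 2)).Adj 0 1 := by decide
    have : (⊥ : SimpleGraph (Fin 2)).Adj (e.symm 0) (e.symm 1) := by
      rw [e.symm.map_adj_iff]; exact h01
    exact this
  · exact ⟨1, wl_aux⟩
  · intro ℓ
    unfold coveredWalks
    refine Finset.sum_congr rfl fun L _ => Finset.sum_congr rfl fun a _ =>
      Finset.sum_congr rfl fun b _ => ?_
    rw [key, key]
  · intro α f ℓ
    congr 1
    unfold coveredWalks
    refine Finset.sum_congr rfl fun L _ => Finset.sum_congr rfl fun a _ =>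
      Finset.sum_congr rfl fun b _ => ?_
    rw [key, key]

end RSNN
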